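/- For every nonnegative integer n ≥ 1, the Cassini identity W_{n+1}·W_{n-1} − W_n² = (−q)^{n−1}·(W_2·W_0 − W_1²) holds, where multiplication is quaternion multiplication. -/

import Mathlib

open Quaternion

theorem stmt0 (p q : ℝ) (w : ℕ → ℝ) (hw : ∀ n, w (n + 2) = p * w (n + 1) + q * w n)
    (W : ℕ → ℍ[ℝ]) (hW : ∀ n, W n = ⟨w n, w (n + 1), w (n + 2), w (n + 3)⟩)
    (n : ℕ) (hn : 1 ≤ n) :
    W (n + 1) * W (n - 1) - (W n) ^ 2 =
      ((-q) ^ (n - 1)) • (W 2 * W 0 - (W 1) ^ 2) := by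
  have hrec : ∀ m, W (m + 2) = p • W (m + 1) + q • W m := by
    intro m
    rw [hW, hW, hW]
    ext <;> simp [hw] <;> rfl
  obtain ⟨m, rfl⟩ : ∃ m, n = m + 1 := ⟨n - 1, (Nat.succ_pred_eq_of_pos hn).symm⟩
  simp only [Nat.add_sub_cancel]
  induction m with
  | zero => simp
  | succ m ih =>
    have ih' := ih (Nat.le_add_left 1 m)
    have h1 := hrec (m + 1)
    have h2 := hrec m
    have : W (m + 1 + 1 + 1) * W (m + 1) - W (m + 1 + 1) ^ 2 =
        (-q) • (W (m + 1 + 1) * W m - W (m + 1) ^ 2) := by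
      rw [show m + 1 + 1 + 1 = m + 1 + 2 from rfl, hrec, show m + 1 + 1 = m + 2 from rfl,
        hrec]
      simp only [sq, add_mul, mul_add, smul_mul_assoc, mul_smul_comm, smul_add, smul_sub,
        smul_smul, sub_mul, mul_sub]
      module
    rw [this, ih', pow_succ, smul_smul]
    ring_nf
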